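/- The kernel of H, viewed as a linear map on ℂᴺ ⊕ ℂᴺ, is exactly the two-dimensional subspace spanned by the two vectors (p⁻¹·b̄, 0) and (0, b̄). (This is the paper's claim for the adiabatic linear-systems solver: the zero-eigenvalue subspace of the Hamiltonian H(s) is spanned by |1, x(s)⟩ and |0, b̄⟩, where |x(s)⟩ ∝ A(s)⁻¹|b̄⟩ encodes the instantaneous solution of the linear system.) -/

import Mathlib

open scoped Matrix

lemma vecMulVec_mulVec' {N : ℕ} (a c x : Fin N → ℂ) :
    (Matrix.vecMulVec a c) *ᵥ x = (c ⬝ᵥ x) • a := by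
  ext i
  simp only [Matrix.mulVec, Matrix.vecMulVec, dotProduct, Pi.smul_apply, smul_eq_mul,
    Matrix.of_apply, Finset.sum_mul]
  exact Finset.sum_congr rfl fun j _ => by ring

theorem stmt8 (N : ℕ) (hN : 1 ≤ N) (p : Matrix (Fin N) (Fin N) ℂ)
    (hp : p.IsHermitian) (hdet : IsUnit p.det)
    (b : Fin N → ℂ) (hb : star b ⬝ᵥ b = 1)
    (P : Matrix (Fin N) (Fin N) ℂ) (hP : P = 1 - Matrix.vecMulVec b (star b))
    (H : Matrix (Fin N ⊕ Fin N) (Fin N ⊕ Fin N) ℂ)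
    (hH : H = Matrix.fromBlocks 0 (p * P) (P * p) 0) :
    LinearMap.ker (Matrix.toLin' H) =
      Submodule.span ℂ {Sum.elim ((p⁻¹).mulVec b) (0 : Fin N → ℂ),
                        Sum.elim (0 : Fin N → ℂ) b}
    ∧ Module.finrank ℂ (LinearMap.ker (Matrix.toLin' H)) = 2 := by
  have hpinv : p * p⁻¹ = 1 := Matrix.mul_nonsing_inv p hdet
  have hinvp : p⁻¹ * p = 1 := Matrix.nonsing_inv_mul p hdet
  have hPv : ∀ y : Fin N → ℂ, P *ᵥ y = y - (star b ⬝ᵥ y) • b := by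
    intro y
    rw [hP, Matrix.sub_mulVec, Matrix.one_mulVec, vecMulVec_mulVec']
  have hPb : P *ᵥ b = 0 := by rw [hPv, hb, one_smul, sub_self]
  have hb0 : b ≠ 0 := by
    intro h
    rw [h] at hb
    simp at hb
  have hv1ne : (p⁻¹ *ᵥ b) ≠ 0 := by
    intro h
    apply hb0
    have : p *ᵥ (p⁻¹ *ᵥ b) = p *ᵥ 0 := by rw [h]
    rwa [Matrix.mulVec_mulVec, hpinv, Matrix.one_mulVec, Matrix.mulVec_zero] at this
  -- membership characterization of the kernel
  have hker : ∀ v : Fin N ⊕ Fin N → ℂ, v ∈ LinearMap.ker (Matrix.toLin' H) ↔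
      (p * P) *ᵥ (v ∘ Sum.inr) = 0 ∧ (P * p) *ᵥ (v ∘ Sum.inl) = 0 := by
    intro v
    rw [LinearMap.mem_ker, Matrix.toLin'_apply, hH, Matrix.fromBlocks_mulVec]
    simp only [Matrix.zero_mulVec, zero_add, add_zero]
    constructor
    · intro h
      exact ⟨congrArg (· ∘ Sum.inl) h, congrArg (· ∘ Sum.inr) h⟩
    · rintro ⟨h1, h2⟩
      funext i
      cases i with
      | inl i => exact congrFun h1 i
      | inr i => exact congrFun h2 i
  have hspan : LinearMap.ker (Matrix.toLin' H) =
      Submodule.span ℂ {Sum.elim ((p⁻¹).mulVec b) (0 : Fin N → ℂ),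
                        Sum.elim (0 : Fin N → ℂ) b} := by
    apply le_antisymm
    · intro v hv
      rw [hker] at hv
      obtain ⟨h1, h2⟩ := hv
      set x := v ∘ Sum.inl with hx
      set y := v ∘ Sum.inr with hy
      have hPy : P *ᵥ y = 0 := by
        have : p⁻¹ *ᵥ ((p * P) *ᵥ y) = 0 := by rw [h1, Matrix.mulVec_zero]
        rwa [Matrix.mulVec_mulVec, ← Matrix.mul_assoc, hinvp, Matrix.one_mul] at this
      have hyb : y = (star b ⬝ᵥ y) • b := by
        have h := hPv y
        rw [hPy] at h
        exact sub_eq_zero.mp h.symm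
      have hPpx : P *ᵥ (p *ᵥ x) = 0 := by
        rwa [Matrix.mulVec_mulVec]
      have hpxb : p *ᵥ x = (star b ⬝ᵥ (p *ᵥ x)) • b := by
        have h := hPv (p *ᵥ x)
        rw [hPpx] at h
        exact (sub_eq_zero.mp h.symm)
      have hxeq : x = (star b ⬝ᵥ (p *ᵥ x)) • (p⁻¹ *ᵥ b) := by
        have : p⁻¹ *ᵥ (p *ᵥ x) = p⁻¹ *ᵥ ((star b ⬝ᵥ (p *ᵥ x)) • b) := by rw [← hpxb]
        rwa [Matrix.mulVec_mulVec, hinvp, Matrix.one_mulVec, Matrix.mulVec_smul] at this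
      rw [Submodule.mem_span_pair]
      refine ⟨star b ⬝ᵥ (p *ᵥ x), star b ⬝ᵥ y, ?_⟩
      funext i
      cases i with
      | inl i =>
        have := congrFun hxeq i
        simpa [hx] using this.symm
      | inr i =>
        have := congrFun hyb i
        simpa [hy] using this.symm
    · rw [Submodule.span_le]
      rintro v (rfl | rfl)
      · rw [SetLike.mem_coe, hker]
        constructor
        · simp
        · have : (P * p) *ᵥ (p⁻¹ *ᵥ b) = 0 := by
            rw [Matrix.mulVec_mulVec, Matrix.mul_assoc, hpinv, Matrix.mul_one, hPb]
          simpa using this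
      · rw [SetLike.mem_coe, hker]
        constructor
        · have : (p * P) *ᵥ b = 0 := by
            rw [← Matrix.mulVec_mulVec, hPb, Matrix.mulVec_zero]
          simpa using this
        · simp
  refine ⟨hspan, ?_⟩
  rw [hspan]
  have hrange : ({Sum.elim ((p⁻¹).mulVec b) (0 : Fin N → ℂ),
      Sum.elim (0 : Fin N → ℂ) b} : Set (Fin N ⊕ Fin N → ℂ)) =
      Set.range ![Sum.elim ((p⁻¹).mulVec b) (0 : Fin N → ℂ),
                  Sum.elim (0 : Fin N → ℂ) b] := by
    simp [Matrix.range_cons, Matrix.range_empty, Set.pair_comm]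
  rw [hrange, finrank_span_eq_card, Fintype.card_fin]
  rw [LinearIndependent.pair_iff]
  intro s t hst
  have ht : t = 0 := by
    obtain ⟨i, hi⟩ := Function.ne_iff.mp hb0
    have := congrFun hst (Sum.inr i)
    simp at this
    rcases this with h | h
    · exact h
    · exact absurd h hi
  have hs : s = 0 := by
    have hsmul : s • (p⁻¹ *ᵥ b) = 0 := by
      funext i
      have := congrFun hst (Sum.inl i)
      simpa [ht] using this
    rcases smul_eq_zero.mp hsmul with h | h
    · exact h
    · exact absurd h hv1ne
  exact ⟨hs, ht⟩
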